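/- Let n ≥ 3 be an integer, R > 1, R_* > 1, and let ρ be a regular metric on [1,R_*]. Suppose H : [1,R] → [1,R_*] is continuously differentiable with H(1) = 1 and H'(t) ≥ 0 for all t, and suppose there is a constant c ∈ ℝ with 𝓛[H](t) = c for all t ∈ [1,R]. Then c ≤ ρ(1). -/

import Mathlib

/-- A `C¹` function `ρ : [1,R₁] → (0,∞)` is a *regular metric* if `s ↦ ρ(s)sⁿ`
is nondecreasing on `[1,R₁]` (so its minimum is `ρ(1)`). -/
def IsRegularMetric (n : ℕ) (R₁ : ℝ) (ρ : ℝ → ℝ) : Prop :=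
  ContDiffOn ℝ 1 ρ (Set.Icc 1 R₁) ∧ (∀ s ∈ Set.Icc 1 R₁, 0 < ρ s) ∧
    MonotoneOn (fun s => ρ s * s ^ n) (Set.Icc 1 R₁)

/-- Key pointwise inequality: for `x ≥ 0` and `n ≥ 3`,
`(1 - x) * (1 + x/(n-1)) ^ ((n-2)/2) ≤ 1`. -/
lemma key_ineq (n : ℕ) (hn : 3 ≤ n) (x : ℝ) (hx : 0 ≤ x) :
    (1 - x) * (1 + x / ((n : ℝ) - 1)) ^ (((n : ℝ) - 2) / 2) ≤ 1 := by
  have hn3 : (3 : ℝ) ≤ (n : ℝ) := by exact_mod_cast hn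
  have hn0 : (0 : ℝ) < (n : ℝ) := by linarith
  have hn1 : (0 : ℝ) < (n : ℝ) - 1 := by linarith
  have hp₂ : (0 : ℝ) < 1 + x / ((n : ℝ) - 1) := by
    have := div_nonneg hx hn1.le; linarith
  by_cases hx1 : x ≤ 1
  · have hp₁ : (0 : ℝ) ≤ 1 - x := by linarith
    have hw₁ : (0 : ℝ) ≤ 2 / (n : ℝ) := by positivity
    have hw₂ : (0 : ℝ) ≤ ((n : ℝ) - 2) / (n : ℝ) := div_nonneg (by linarith) hn0.le
    have hw : 2 / (n : ℝ) + ((n : ℝ) - 2) / (n : ℝ) = 1 := by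
      field_simp
      ring
    have h := Real.geom_mean_le_arith_mean2_weighted hw₁ hw₂ hp₁ hp₂.le hw
    have hrhs : 2 / (n : ℝ) * (1 - x) + ((n : ℝ) - 2) / (n : ℝ) * (1 + x / ((n : ℝ) - 1)) ≤ 1 := by
      have heq : 2 / (n : ℝ) * (1 - x) + ((n : ℝ) - 2) / (n : ℝ) * (1 + x / ((n : ℝ) - 1))
          = 1 - x / ((n : ℝ) - 1) := by
        field_simp
        ring
      rw [heq]
      have := div_nonneg hx hn1.le
      linarith
    have hle1 : (1 - x) ^ (2 / (n : ℝ)) * (1 + x / ((n : ℝ) - 1)) ^ (((n : ℝ) - 2) / (n : ℝ)) ≤ 1 :=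
      h.trans hrhs
    have hbase : (0 : ℝ) ≤ (1 - x) ^ (2 / (n : ℝ)) * (1 + x / ((n : ℝ) - 1)) ^ (((n : ℝ) - 2) / (n : ℝ)) := by
      positivity
    have := Real.rpow_le_rpow hbase hle1 (le_of_lt (by positivity : (0:ℝ) < (n:ℝ)/2))
    rw [Real.one_rpow, Real.mul_rpow (by positivity) (by positivity),
      ← Real.rpow_mul hp₁, ← Real.rpow_mul hp₂.le] at this
    have e1 : 2 / (n : ℝ) * ((n : ℝ) / 2) = 1 := by field_simp
    have e2 : ((n : ℝ) - 2) / (n : ℝ) * ((n : ℝ) / 2) = ((n : ℝ) - 2) / 2 := by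
      field_simp
    rw [e1, e2, Real.rpow_one] at this
    exact this
  · have : (1 - x) * (1 + x / ((n : ℝ) - 1)) ^ (((n : ℝ) - 2) / 2) ≤ 0 :=
      mul_nonpos_of_nonpos_of_nonneg (by linarith) (Real.rpow_pos_of_pos hp₂ _).le
    linarith

/-- If `H : [1,R] → [1,R_*]` is `C¹` with `H(1) = 1`, `H' ≥ 0`, and the
characteristic expression `𝓛[H]` is constantly equal to `c`, then `c ≤ ρ(1)`
(the generalized Nitsche inequality). -/
theorem stmt4 (n : ℕ) (hn : 3 ≤ n) (R Rs : ℝ) (hR : 1 < R) (hRs : 1 < Rs)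
    (ρ : ℝ → ℝ) (hρ : IsRegularMetric n Rs ρ)
    (H H' : ℝ → ℝ)
    (hmap : ∀ t ∈ Set.Icc 1 R, H t ∈ Set.Icc 1 Rs)
    (hH : ∀ t ∈ Set.Icc 1 R, HasDerivWithinAt H (H' t) (Set.Icc 1 R) t)
    (hH'cont : ContinuousOn H' (Set.Icc 1 R))
    (hH1 : H 1 = 1) (hH'nn : ∀ t ∈ Set.Icc 1 R, 0 ≤ H' t)
    (c : ℝ)
    (hc : ∀ t ∈ Set.Icc 1 R,
      ρ (H t) * ((H t) ^ 2 - t ^ 2 * H' t ^ 2) *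
        ((H t) ^ 2 + t ^ 2 * H' t ^ 2 / ((n : ℝ) - 1)) ^ (((n : ℝ) - 2) / 2) = c) :
    c ≤ ρ 1 := by
  have h1mem : (1 : ℝ) ∈ Set.Icc 1 R := ⟨le_refl 1, hR.le⟩
  have hρ1 : 0 < ρ 1 := hρ.2.1 1 ⟨le_refl 1, hRs.le⟩
  have hkey := key_ineq n hn (H' 1 ^ 2) (sq_nonneg _)
  have hc1 := hc 1 h1mem
  rw [hH1] at hc1
  simp only [one_pow, one_mul] at hc1
  calc c = ρ 1 * ((1 - H' 1 ^ 2) * (1 + H' 1 ^ 2 / ((n : ℝ) - 1)) ^ (((n : ℝ) - 2) / 2)) := by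
        rw [← hc1]; ring
    _ ≤ ρ 1 * 1 := by
        exact mul_le_mul_of_nonneg_left hkey hρ1.le
    _ = ρ 1 := mul_one _
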